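/- Define F(w) = a₀ + a₁w + a₂w² and G(w) = w·F(w) − (a₃ + a₄w + a₅w²) = a₂w³ + (a₁ − a₅)w² + (a₀ − a₄)w − a₃. Then Res(F, G) = a₂·(a₀a₁a₄a₅-type polynomial) satisfies: a₂⁻¹·Res(F,G) = −(d₁d₂ + d₂d₃ + d₁d₃), where d₁ = −a₂a₃ + a₀a₅, d₂ = −a₁a₃ + a₂a₃ + a₀a₄ − a₀a₅, d₃ = a₂a₃ − a₂a₄ − a₀a₅ + a₁a₅ (assuming a₂ ≠ 0). -/

import Mathlib

/-- The resultant `Res(F,G)` of `F(w) = a₂w² + a₁w + a₀` and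
`G(w) = a₂w³ + (a₁−a₅)w² + (a₀−a₄)w − a₃`, computed as the determinant of the
Sylvester matrix, satisfies `a₂⁻¹ · Res(F,G) = −(d₁d₂ + d₂d₃ + d₁d₃)`. -/
theorem resultant_FG_formula (a₀ a₁ a₂ a₃ a₄ a₅ : ℂ) (ha₂ : a₂ ≠ 0)
    (d₁ d₂ d₃ : ℂ)
    (hd₁ : d₁ = -a₂ * a₃ + a₀ * a₅)
    (hd₂ : d₂ = -a₁ * a₃ + a₂ * a₃ + a₀ * a₄ - a₀ * a₅)
    (hd₃ : d₃ = a₂ * a₃ - a₂ * a₄ - a₀ * a₅ + a₁ * a₅)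
    (ResFG : ℂ)
    (hRes : ResFG = Matrix.det
      !![a₂, a₁, a₀, 0, 0;
         0, a₂, a₁, a₀, 0;
         0, 0, a₂, a₁, a₀;
         a₂, a₁ - a₅, a₀ - a₄, -a₃, 0;
         0, a₂, a₁ - a₅, a₀ - a₄, -a₃]) :
    a₂⁻¹ * ResFG = -(d₁ * d₂ + d₂ * d₃ + d₁ * d₃) := by
  subst hd₁ hd₂ hd₃ hRes
  rw [show Matrix.det
      !![a₂, a₁, a₀, 0, 0;
         0, a₂, a₁, a₀, 0;
         0, 0, a₂, a₁, a₀;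
         a₂, a₁ - a₅, a₀ - a₄, -a₃, 0;
         0, a₂, a₁ - a₅, a₀ - a₄, -a₃] =
      a₂ * (-((-a₂ * a₃ + a₀ * a₅) * (-a₁ * a₃ + a₂ * a₃ + a₀ * a₄ - a₀ * a₅) +
        (-a₁ * a₃ + a₂ * a₃ + a₀ * a₄ - a₀ * a₅) * (a₂ * a₃ - a₂ * a₄ - a₀ * a₅ + a₁ * a₅) +
        (-a₂ * a₃ + a₀ * a₅) * (a₂ * a₃ - a₂ * a₄ - a₀ * a₅ + a₁ * a₅))) from by
    simp [Matrix.det_succ_row_zero, Fin.sum_univ_succ, Fin.succAbove]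
    ring]
  field_simp
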